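/- Let (a_n)_{n≥0} be an ultimately periodic sequence in O_K with preperiod a_0,…,a_N and period a_{N+1},…,a_{N+k}, and let E = M(a_0,…,a_N)·M(a_{N+1},…,a_{N+k})·M(a_0,…,a_N)^{-1} with entries E_11, E_12, E_21, E_22 ∈ K. Set Δ = (E_22 − E_11)² + 4·E_12·E_21. If Δ > 0 and Δ is not the square of an element of K, then the continued fraction [a_0,a_1,…] converges to some real number. If Δ < 0, then there is no real number to which the continued fraction converges. -/

import Mathlib

open Filter Topology

/-- Numerator continuants: `cfP a (n+1) = Pₙ`, with `cfP a 0 = P₋₁ = 1`. -/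
def cfP {R : Type*} [CommRing R] (a : ℕ → R) : ℕ → R
  | 0 => 1
  | 1 => a 0
  | n + 2 => a (n + 1) * cfP a (n + 1) + cfP a n

/-- Denominator continuants: `cfQ a (n+1) = Qₙ`, with `cfQ a 0 = Q₋₁ = 0`. -/
def cfQ {R : Type*} [CommRing R] (a : ℕ → R) : ℕ → R
  | 0 => 0
  | 1 => 1
  | n + 2 => a (n + 1) * cfQ a (n + 1) + cfQ a n

/-- The sequence `a` is ultimately periodic. -/
def UltimatelyPeriodic {α : Type*} (a : ℕ → α) : Prop :=
  ∃ N k : ℕ, 1 ≤ k ∧ ∀ n > N, a (n + k) = a n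

/-- The continued fraction `[a₀, a₁, …]` converges to `ξ`:
`Qₙ ≠ 0` for all sufficiently large `n` and `Pₙ/Qₙ → ξ`. -/
def CFConvergesTo (a : ℕ → ℝ) (ξ : ℝ) : Prop :=
  (∃ N, ∀ n ≥ N, cfQ a (n + 1) ≠ 0) ∧
    Tendsto (fun n => cfP a (n + 1) / cfQ a (n + 1)) atTop (nhds ξ)

/-- Product of the matrices `D(α) = [[α,1],[1,0]]` over a word. -/
def cfM {K : Type*} [CommRing K] (l : List K) : Matrix (Fin 2) (Fin 2) K :=
  (l.map (fun α => !![α, 1; 1, 0])).prod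


section Basics
variable {R : Type*} [CommRing R] (a : ℕ → R)

lemma cfM_append (l₁ l₂ : List R) : cfM (l₁ ++ l₂) = cfM l₁ * cfM l₂ := by
  simp [cfM, List.map_append, List.prod_append]

lemma cfM_singleton (x : R) : cfM [x] = !![x, 1; 1, 0] := by
  simp [cfM]

lemma cfM_range (n : ℕ) :
    cfM ((List.range (n + 1)).map a) =
      !![cfP a (n + 1), cfP a n; cfQ a (n + 1), cfQ a n] := by
  induction n with
  | zero =>
    show cfM [a 0] = _
    rw [cfM_singleton]
    simp [cfP, cfQ]
  | succ n ih =>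
    rw [List.range_succ, List.map_append, cfM_append, ih, List.map_singleton,
      cfM_singleton]
    rw [show cfP a (n+1+1) = a (n+1) * cfP a (n+1) + cfP a n from rfl,
        show cfQ a (n+1+1) = a (n+1) * cfQ a (n+1) + cfQ a n from rfl]
    ext i j
    fin_cases i <;> fin_cases j <;>
      simp [Matrix.mul_apply, Fin.sum_univ_two] <;> ring

lemma det_cfM (l : List R) : (cfM l).det = (-1) ^ l.length := by
  induction l with
  | nil => simp [cfM]
  | cons x l ih =>
    rw [show (x :: l) = [x] ++ l from rfl, cfM_append, Matrix.det_mul, ih]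
    simp [cfM, Matrix.det_fin_two_of]
    ring

lemma cf_det_id (n : ℕ) :
    cfP a (n + 1) * cfQ a n - cfP a n * cfQ a (n + 1) = (-1) ^ (n + 1) := by
  induction n with
  | zero => simp [cfP, cfQ]
  | succ n ih =>
    rw [show cfP a (n+2) = a (n+1) * cfP a (n+1) + cfP a n from rfl,
        show cfQ a (n+2) = a (n+1) * cfQ a (n+1) + cfQ a n from rfl]
    rw [pow_succ]
    linear_combination (-1 : R) * ih

lemma ch2 (X : Matrix (Fin 2) (Fin 2) R) :
    X * X = X.trace • X - X.det • (1 : Matrix (Fin 2) (Fin 2) R) := by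
  ext i j
  fin_cases i <;> fin_cases j <;>
    simp [Matrix.mul_apply, Fin.sum_univ_two, Matrix.trace_fin_two, Matrix.det_fin_two,
      Matrix.one_apply] <;> ring

end Basics


section Periodic
variable {R : Type*} [CommRing R] (a : ℕ → R) (N k : ℕ)

/-- the period-word matrix starting at `s` -/
def cfW (s : ℕ) : Matrix (Fin 2) (Fin 2) R :=
  cfM ((List.range k).map (fun i => a (s + i)))

variable (hper : ∀ n > N, a (n + k) = a n)

include hper in
lemma per_ge : ∀ s ≥ N + 1, a (s + k) = a s := fun s hs => hper s (by omega)

include hper in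
lemma word_shift : ∀ s ≥ N + 1,
    (List.range k).map (fun i => a (s + k + i)) = (List.range k).map (fun i => a (s + i)) := by
  intro s hs
  apply List.map_congr_left
  intro i hi
  have : s + k + i = (s + i) + k := by omega
  rw [this, per_ge a N k hper (s + i) (by omega)]

include hper in
lemma cfW_shift_k : ∀ s ≥ N + 1, cfW a k (s + k) = cfW a k s := by
  intro s hs
  unfold cfW
  rw [word_shift a N k hper s hs]

include hper in
lemma cfW_add_mul : ∀ s ≥ N + 1, ∀ m, cfW a k (s + m * k) = cfW a k s := by
  intro s hs m
  induction m with
  | zero => simp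
  | succ m ih =>
    have : s + (m + 1) * k = (s + m * k) + k := by ring
    rw [this, cfW_shift_k a N k hper _ (by omega), ih]

lemma range_split (s : ℕ) :
    (List.range (s + k)).map a =
      (List.range s).map a ++ (List.range k).map (fun i => a (s + i)) := by
  rw [List.range_add, List.map_append, List.map_map]
  rfl

lemma cfM_step (s : ℕ) :
    cfM ((List.range (s + k)).map a) = cfM ((List.range s).map a) * cfW a k s := by
  rw [range_split, cfM_append]; rfl

variable (hk : 1 ≤ k)

include hper hk in
lemma trace_shift : ∀ s ≥ N + 1, (cfW a k (s + 1)).trace = (cfW a k s).trace := by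
  intro s hs
  obtain ⟨k', rfl⟩ : ∃ k', k = k' + 1 := ⟨k - 1, by omega⟩
  have h1 : (List.range (k' + 1)).map (fun i => a (s + i)) =
      a s :: (List.range k').map (fun i => a (s + 1 + i)) := by
    rw [List.range_succ_eq_map, List.map_cons, List.map_map]
    simp only [Nat.add_zero]
    congr 1
    apply List.map_congr_left
    intro i _
    show a (s + (i + 1)) = a (s + 1 + i)
    congr 1; omega
  have h2 : (List.range (k' + 1)).map (fun i => a (s + 1 + i)) =
      (List.range k').map (fun i => a (s + 1 + i)) ++ [a s] := by
    rw [List.range_succ, List.map_append, List.map_singleton]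
    congr 1
    have : s + 1 + k' = s + (k' + 1) := by omega
    rw [this, per_ge a N (k' + 1) hper s hs]
  unfold cfW
  rw [h1, h2, show (a s :: (List.range k').map (fun i => a (s + 1 + i)))
      = [a s] ++ (List.range k').map (fun i => a (s + 1 + i)) from rfl,
    cfM_append, cfM_append, Matrix.trace_mul_comm]

include hper hk in
lemma trace_const : ∀ j, (cfW a k (N + 1 + j)).trace = (cfW a k (N + 1)).trace := by
  intro j
  induction j with
  | zero => rfl
  | succ j ih =>
    have : N + 1 + (j + 1) = (N + 1 + j) + 1 := by omega
    rw [this, trace_shift a N k hper hk _ (by omega), ih]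

lemma det_cfW (s : ℕ) : (cfW a k s).det = (-1) ^ k := by
  rw [cfW, det_cfM, List.length_map, List.length_range]

include hper in
lemma cfQ_rec (s : ℕ) (hs : N + 1 ≤ s) (m : ℕ) :
    cfQ a (s + (m + 2) * k) =
      (cfW a k s).trace * cfQ a (s + (m + 1) * k) - (-1) ^ k * cfQ a (s + m * k) := by
  have key : ∀ m', cfM ((List.range (s + (m' + 1) * k)).map a)
      = cfM ((List.range (s + m' * k)).map a) * cfW a k s := by
    intro m'
    have h1 : s + (m' + 1) * k = (s + m' * k) + k := by ring
    rw [h1, cfM_step, cfW_add_mul a N k hper s hs]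
  have hmm : cfM ((List.range (s + (m + 2) * k)).map a)
      = (cfW a k s).trace • cfM ((List.range (s + (m + 1) * k)).map a)
        - (cfW a k s).det • cfM ((List.range (s + m * k)).map a) := by
    rw [key (m + 1), key m, mul_assoc, ch2]
    rw [Matrix.mul_sub, Matrix.mul_smul, Matrix.mul_smul, Matrix.mul_one]
  -- evaluate at entry (1,0); note s + m*k ≥ 1 etc.
  have ent : ∀ n : ℕ, 1 ≤ n → cfM ((List.range n).map a) 1 0 = cfQ a n := by
    intro n hn
    obtain ⟨n', rfl⟩ : ∃ n', n = n' + 1 := ⟨n - 1, by omega⟩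
    rw [cfM_range]
    simp
  have e1 : cfM ((List.range (s + (m + 2) * k)).map a) 1 0 =
      ((cfW a k s).trace • cfM ((List.range (s + (m + 1) * k)).map a)
        - (cfW a k s).det • cfM ((List.range (s + m * k)).map a)) 1 0 := by rw [hmm]
  rw [ent _ (by omega), Matrix.sub_apply, Matrix.smul_apply, Matrix.smul_apply,
    smul_eq_mul, smul_eq_mul, ent _ (by omega), ent _ (by omega), det_cfW] at e1
  exact e1

end Periodic


section RealRec

/-- solution of a 2-term linear recurrence via the roots of its char. polynomial -/
lemma rec_solution (u : ℕ → ℝ) (t d lam mu : ℝ)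
    (hrec : ∀ m, u (m + 2) = t * u (m + 1) - d * u m)
    (hsum : lam + mu = t) (hprod : lam * mu = d) (hne : lam ≠ mu) :
    ∀ m, u m = ((u 1 - mu * u 0) / (lam - mu)) * lam ^ m
      + ((lam * u 0 - u 1) / (lam - mu)) * mu ^ m := by
  have hlm : lam - mu ≠ 0 := sub_ne_zero.mpr hne
  set c := (u 1 - mu * u 0) / (lam - mu) with hc
  set c' := (lam * u 0 - u 1) / (lam - mu) with hc'
  have key : ∀ m, u m = c * lam ^ m + c' * mu ^ m ∧
      u (m + 1) = c * lam ^ (m + 1) + c' * mu ^ (m + 1) := by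
    intro m
    induction m with
    | zero =>
      constructor
      · simp only [pow_zero, mul_one]
        rw [hc, hc', ← add_div, eq_div_iff hlm]
        ring
      · simp only [zero_add, pow_one]
        rw [hc, hc', div_mul_eq_mul_div, div_mul_eq_mul_div, ← add_div, eq_div_iff hlm]
        ring
    | succ m ih =>
      refine ⟨ih.2, ?_⟩
      rw [hrec m, ih.1, ih.2]
      have h1 : lam ^ (m + 2) = t * lam ^ (m + 1) - d * lam ^ m := by
        rw [← hsum, ← hprod]; ring
      have h2 : mu ^ (m + 2) = t * mu ^ (m + 1) - d * mu ^ m := by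
        rw [← hsum, ← hprod]; ring
      rw [h1, h2]; ring
  exact fun m => (key m).1

lemma growth_lemma (c c' lam mu : ℝ) (hc : c ≠ 0) (hlam : 1 < |lam|) (hmu : |mu| ≤ 1) :
    ∃ M : ℕ, ∀ m ≥ M, (|c| / 2) * |lam| ^ m ≤ |c * lam ^ m + c' * mu ^ m| := by
  have hcpos : 0 < |c| := abs_pos.mpr hc
  obtain ⟨M, hM⟩ := pow_unbounded_of_one_lt (2 * |c'| / |c|) hlam
  refine ⟨M, fun m hm => ?_⟩
  have hmono : |lam| ^ M ≤ |lam| ^ m := pow_le_pow_right₀ (le_of_lt hlam) hm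
  have h1 : |c' * mu ^ m| ≤ |c'| := by
    rw [abs_mul, abs_pow]
    calc |c'| * |mu| ^ m ≤ |c'| * 1 := by
          exact mul_le_mul_of_nonneg_left (pow_le_one₀ (abs_nonneg _) hmu) (abs_nonneg _)
      _ = |c'| := mul_one _
  have h2 : |c'| ≤ (|c| / 2) * |lam| ^ m := by
    have : 2 * |c'| / |c| < |lam| ^ m := lt_of_lt_of_le hM hmono
    rw [div_lt_iff₀ hcpos] at this
    nlinarith
  have h3 : |c * lam ^ m| = |c| * |lam| ^ m := by rw [abs_mul, abs_pow]
  calc (|c| / 2) * |lam| ^ m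
      = |c| * |lam| ^ m - (|c| / 2) * |lam| ^ m := by ring
    _ ≤ |c * lam ^ m| - |c' * mu ^ m| := by
        rw [h3]; linarith [le_trans h1 h2]
    _ ≤ |c * lam ^ m + c' * mu ^ m| := by
        have := abs_sub_abs_le_abs_sub (c * lam ^ m) (-(c' * mu ^ m))
        simp only [abs_neg, sub_neg_eq_add] at this
        linarith
  
lemma bounded_lemma (u : ℕ → ℝ) (t : ℝ) (ht : |t| < 2)
    (hrec : ∀ m, u (m + 2) = t * u (m + 1) - u m) :
    ∃ C : ℝ, ∀ m, |u m| ≤ C := by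
  set I : ℝ := u 0 ^ 2 - t * u 0 * u 1 + u 1 ^ 2 with hI
  have hinv : ∀ m, u m ^ 2 - t * u m * u (m + 1) + u (m + 1) ^ 2 = I := by
    intro m
    induction m with
    | zero => rfl
    | succ m ih =>
      rw [hrec m, ← ih]; ring
  have ht2 : 0 < 1 - |t| / 2 := by linarith
  have hb : ∀ m, u m ^ 2 ≤ I / (1 - |t| / 2) := by
    intro m
    have h := hinv m
    have habs : t * u m * u (m + 1) ≤ |t| / 2 * (u m ^ 2 + u (m + 1) ^ 2) := by
      have h1 : t * u m * u (m+1) ≤ |t * u m * u (m+1)| := le_abs_self _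
      have h2 : |t * u m * u (m+1)| = |t| * |u m * u (m+1)| := by
        rw [abs_mul, abs_mul, mul_assoc, ← abs_mul]
      have h3 : |u m * u (m+1)| ≤ (u m ^ 2 + u (m+1) ^ 2) / 2 := by
        rw [abs_mul]
        nlinarith [sq_nonneg (|u m| - |u (m+1)|), sq_abs (u m), sq_abs (u (m+1))]
      calc t * u m * u (m+1) ≤ |t| * |u m * u (m+1)| := by rw [← h2]; exact h1
        _ ≤ |t| * ((u m ^ 2 + u (m+1) ^ 2) / 2) := by
            apply mul_le_mul_of_nonneg_left h3 (abs_nonneg _)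
        _ = |t| / 2 * (u m ^ 2 + u (m + 1) ^ 2) := by ring
    have : (1 - |t| / 2) * u m ^ 2 ≤ I := by nlinarith [sq_nonneg (u (m+1))]
    rw [le_div_iff₀ ht2]
    linarith [this]
  refine ⟨Real.sqrt (I / (1 - |t| / 2)), fun m => ?_⟩
  have := hb m
  calc |u m| = Real.sqrt (u m ^ 2) := by rw [Real.sqrt_sq_eq_abs]
    _ ≤ Real.sqrt (I / (1 - |t| / 2)) := Real.sqrt_le_sqrt this

end RealRec


section Cases

lemma cf_det_id_real (b : ℕ → ℝ) (n : ℕ) :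
    |cfP b (n + 1) * cfQ b n - cfP b n * cfQ b (n + 1)| = 1 := by
  rw [cf_det_id]
  rw [abs_pow, abs_neg, abs_one, one_pow]

/-- divergence when the denominators stay bounded -/
lemma neg_case (b : ℕ → ℝ) (C : ℝ) (N₁ : ℕ) (hbd : ∀ n ≥ N₁, |cfQ b n| ≤ C) :
    ¬∃ ξ : ℝ, CFConvergesTo b ξ := by
  rintro ⟨ξ, ⟨⟨N₀, hQ⟩, htend⟩⟩
  set x : ℕ → ℝ := fun n => cfP b (n + 1) / cfQ b (n + 1) with hx
  set C' : ℝ := max C 1 with hC'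
  have hC'1 : 1 ≤ C' := le_max_right _ _
  have hC'0 : 0 < C' := lt_of_lt_of_le one_pos hC'1
  have hbd' : ∀ n ≥ N₁, |cfQ b n| ≤ C' := fun n hn => le_trans (hbd n hn) (le_max_left _ _)
  -- difference of consecutive convergents has absolute value 1/|Q Q|
  have hdiff : ∀ n, n ≥ N₀ → n ≥ N₁ → (1 : ℝ) / C' ^ 2 ≤ |x (n + 1) - x n| := by
    intro n hn0 hn1
    have hq1 : cfQ b (n + 1) ≠ 0 := hQ n hn0
    have hq2 : cfQ b (n + 2) ≠ 0 := hQ (n + 1) (by omega)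
    have heq : x (n + 1) - x n =
        (cfP b (n + 2) * cfQ b (n + 1) - cfP b (n + 1) * cfQ b (n + 2)) /
          (cfQ b (n + 2) * cfQ b (n + 1)) := by
      simp only [hx]
      field_simp
    have habs : |x (n + 1) - x n| = 1 / (|cfQ b (n + 2)| * |cfQ b (n + 1)|) := by
      rw [heq, abs_div, abs_mul, cf_det_id_real b (n + 1)]
    rw [habs]
    apply div_le_div_of_nonneg_left one_pos.le (by positivity)
    calc |cfQ b (n + 2)| * |cfQ b (n + 1)|
        ≤ C' * C' := mul_le_mul (hbd' _ (by omega)) (hbd' _ (by omega)) (abs_nonneg _) hC'0.le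
      _ = C' ^ 2 := (sq C').symm
  -- but the differences tend to 0
  have h1 : Tendsto (fun n => x (n + 1) - x n) atTop (nhds 0) := by
    have := (htend.comp (tendsto_add_atTop_nat 1)).sub htend
    simpa using this
  have h2 : ∀ᶠ n in atTop, |x (n + 1) - x n| < 1 / C' ^ 2 := by
    have := h1.abs
    simp only [abs_zero] at this
    exact this.eventually_lt_const (by positivity)
  obtain ⟨n, hn, h3⟩ := (h2.and (eventually_ge_atTop (max N₀ N₁))).exists
  exact absurd (hdiff n (le_trans (le_max_left _ _) h3) (le_trans (le_max_right _ _) h3))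
    (not_le.mpr hn)

/-- convergence when the denominators grow geometrically -/
lemma pos_case (b : ℕ → ℝ) (A θ : ℝ) (hA : 0 < A) (hθ : 1 < θ) (N₀ : ℕ)
    (hgrow : ∀ n ≥ N₀, A * θ ^ n ≤ |cfQ b n|) :
    ∃ ξ : ℝ, CFConvergesTo b ξ := by
  have hθ0 : (0 : ℝ) < θ := lt_trans one_pos hθ
  have hQne : ∀ n ≥ N₀, cfQ b n ≠ 0 := by
    intro n hn h0
    have := hgrow n hn
    rw [h0, abs_zero] at this
    nlinarith [pow_pos hθ0 n]
  set x : ℕ → ℝ := fun n => cfP b (n + 1) / cfQ b (n + 1) with hx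
  set y : ℕ → ℝ := fun m => x (m + N₀) with hy
  have hcauchy : CauchySeq y := by
    apply cauchySeq_of_le_geometric ((1 : ℝ) / θ ^ 2) (1 / A ^ 2)
      (by rw [div_lt_one (by positivity)]; nlinarith)
    intro m
    set n : ℕ := m + N₀ with hn
    have hq1 : cfQ b (n + 1) ≠ 0 := hQne _ (by omega)
    have hq2 : cfQ b (n + 2) ≠ 0 := hQne _ (by omega)
    have heq : y m - y (m + 1) =
        (cfP b (n + 1) * cfQ b (n + 2) - cfP b (n + 2) * cfQ b (n + 1)) /
          (cfQ b (n + 2) * cfQ b (n + 1)) := by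
      have : (m + 1) + N₀ = n + 1 := by omega
      simp only [hy, hx, this, ← hn]
      field_simp
    have habs : dist (y m) (y (m + 1)) = 1 / (|cfQ b (n + 2)| * |cfQ b (n + 1)|) := by
      rw [Real.dist_eq, heq, abs_div, abs_mul, ← abs_neg (cfP b (n+1) * cfQ b (n+2) - _)]
      rw [show -(cfP b (n + 1) * cfQ b (n + 2) - cfP b (n + 2) * cfQ b (n + 1)) =
        cfP b (n + 1 + 1) * cfQ b (n + 1) - cfP b (n + 1) * cfQ b (n + 1 + 1) by ring]
      rw [cf_det_id_real b (n + 1)]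
    rw [habs]
    have hg1 : A * θ ^ m ≤ |cfQ b (n + 1)| := by
      refine le_trans ?_ (hgrow (n + 1) (by omega))
      have : θ ^ m ≤ θ ^ (n + 1) := pow_le_pow_right₀ hθ.le (by omega)
      nlinarith
    have hg2 : A * θ ^ m ≤ |cfQ b (n + 2)| := by
      refine le_trans ?_ (hgrow (n + 2) (by omega))
      have : θ ^ m ≤ θ ^ (n + 2) := pow_le_pow_right₀ hθ.le (by omega)
      nlinarith
    have hpos : (0 : ℝ) < A * θ ^ m := by positivity
    calc 1 / (|cfQ b (n + 2)| * |cfQ b (n + 1)|)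
        ≤ 1 / ((A * θ ^ m) * (A * θ ^ m)) := by
          apply div_le_div_of_nonneg_left one_pos.le (by positivity)
          exact mul_le_mul hg2 hg1 hpos.le (abs_nonneg _)
      _ = 1 / A ^ 2 * (1 / θ ^ 2) ^ m := by
          rw [div_pow, one_pow, ← pow_mul]
          rw [show (A * θ ^ m) * (A * θ ^ m) = A ^ 2 * θ ^ (2 * m) by rw [pow_mul]; ring]
          rw [one_div, one_div, one_div, mul_inv]
      _ = 1 / A ^ 2 * (1 / θ ^ 2) ^ m := rfl
  obtain ⟨ξ, hξ⟩ := cauchySeq_tendsto_of_complete hcauchy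
  refine ⟨ξ, ⟨⟨N₀, fun n hn => hQne (n + 1) (by omega)⟩, ?_⟩⟩
  rw [← tendsto_add_atTop_iff_nat N₀]
  exact hξ

end Cases


section Combine

lemma geom_lower (u : ℕ → ℝ) (t d lam mu : ℝ)
    (hrec : ∀ m, u (m + 2) = t * u (m + 1) - d * u m)
    (hsum : lam + mu = t) (hprod : lam * mu = d) (hne : lam ≠ mu)
    (hlam : 1 < |lam|) (hmu : |mu| ≤ 1)
    (hc : u 1 ≠ mu * u 0) :
    ∃ ε > 0, ∃ M : ℕ, ∀ m ≥ M, ε * |lam| ^ m ≤ |u m| := by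
  have hlm : lam - mu ≠ 0 := sub_ne_zero.mpr hne
  set c : ℝ := (u 1 - mu * u 0) / (lam - mu) with hcdef
  set c' : ℝ := (lam * u 0 - u 1) / (lam - mu) with hc'def
  have hc0 : c ≠ 0 := by
    rw [hcdef, div_ne_zero_iff]
    exact ⟨sub_ne_zero.mpr hc, hlm⟩
  obtain ⟨M, hM⟩ := growth_lemma c c' lam mu hc0 hlam hmu
  refine ⟨|c| / 2, by positivity, M, fun m hm => ?_⟩
  rw [rec_solution u t d lam mu hrec hsum hprod hne m]
  exact hM m hm

lemma combine_growth (Q : ℕ → ℝ) (k Nb : ℕ) (hk : 1 ≤ k) (x : ℝ) (hx1 : 1 < x)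
    (h : ∀ j, ∃ ε > 0, ∃ M : ℕ, ∀ m ≥ M, ε * x ^ m ≤ |Q (Nb + j + m * k)|) :
    ∃ A > 0, ∃ θ > 1, ∃ N₀ : ℕ, ∀ n ≥ N₀, A * θ ^ n ≤ |Q n| := by
  have hx0 : (0 : ℝ) < x := lt_trans one_pos hx1
  have hk0 : (0 : ℝ) < (k : ℝ) := by exact_mod_cast hk
  choose ε hε M hM using h
  have hne : (Finset.range k).Nonempty := ⟨0, Finset.mem_range.mpr hk⟩
  set εm : ℝ := (Finset.range k).inf' hne ε with hεm
  have hεm0 : 0 < εm := by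
    rw [hεm]
    exact (Finset.lt_inf'_iff hne).mpr fun j _ => hε j
  set Mm : ℕ := (Finset.range k).sup M with hMm
  set θ : ℝ := x ^ ((1 : ℝ) / k) with hθ
  have hθ1 : 1 < θ := by
    rw [hθ]
    apply Real.one_lt_rpow_iff_of_pos hx0 |>.mpr
    exact Or.inl ⟨hx1, by positivity⟩
  set c : ℝ := ((Nb + k : ℕ) : ℝ) / k with hcc
  have hxc : (0 : ℝ) < x ^ c := Real.rpow_pos_of_pos hx0 c
  refine ⟨εm / x ^ c, by positivity, θ, hθ1, Nb + k * (Mm + 1), fun n hn => ?_⟩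
  set j : ℕ := (n - Nb) % k with hj
  set m : ℕ := (n - Nb) / k with hm
  have hjk : j < k := Nat.mod_lt _ (by omega)
  have hdm : k * m + j = n - Nb := Nat.div_add_mod (n - Nb) k
  have hNbn : Nb ≤ n := by omega
  have hnval : n = Nb + j + m * k := by
    rw [Nat.mul_comm m k]
    generalize hg : k * m = p at hdm ⊢
    omega
  have hmM : M j ≤ m := by
    have h2 : (Mm + 1) * k ≤ n - Nb := by
      rw [Nat.mul_comm]
      generalize hg : k * (Mm + 1) = p at hn ⊢
      omega
    have h3 : Mm + 1 ≤ m := (Nat.le_div_iff_mul_le (by omega)).mpr h2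
    have h4 : M j ≤ Mm := Finset.le_sup (Finset.mem_range.mpr hjk)
    omega
  have hgr : ε j * x ^ m ≤ |Q n| := by
    rw [hnval]
    exact hM j m hmM
  have hεle : εm ≤ ε j := Finset.inf'_le ε (Finset.mem_range.mpr hjk)
  -- now the rpow manipulation
  have hθn : θ ^ n = x ^ ((1 : ℝ) / k * n) := by
    rw [hθ, ← Real.rpow_natCast (x ^ ((1:ℝ)/k)) n, ← Real.rpow_mul hx0.le]
  have hexp : (1 : ℝ) / k * n ≤ (m : ℝ) + c := by
    rw [one_div_mul_eq_div, div_le_iff₀ hk0, add_mul, hcc, div_mul_cancel₀ _ (ne_of_gt hk0)]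
    have : (n : ℝ) ≤ (m : ℝ) * k + ((Nb + k : ℕ) : ℝ) := by
      have : n ≤ m * k + (Nb + k) := by
        generalize hg : m * k = p at hnval ⊢
        omega
      exact_mod_cast this
    linarith
  calc εm / x ^ c * θ ^ n = εm * (x ^ ((1:ℝ)/k * n) / x ^ c) := by
        rw [hθn]; ring
    _ ≤ εm * x ^ (m : ℕ) := by
        apply mul_le_mul_of_nonneg_left _ hεm0.le
        rw [div_le_iff₀ hxc, ← Real.rpow_natCast x m, ← Real.rpow_add hx0]
        exact Real.rpow_le_rpow_of_exponent_le hx1.le hexp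
    _ ≤ ε j * x ^ m := mul_le_mul_of_nonneg_right hεle (by positivity)
    _ ≤ |Q n| := hgr

end Combine


section Extra

lemma cfQ_map {R S : Type*} [CommRing R] [CommRing S] (f : R →+* S) (a : ℕ → R) :
    ∀ n, cfQ (fun i => f (a i)) n = f (cfQ a n) := by
  have key : ∀ n, cfQ (fun i => f (a i)) n = f (cfQ a n) ∧
      cfQ (fun i => f (a i)) (n + 1) = f (cfQ a (n + 1)) := by
    intro n
    induction n with
    | zero => exact ⟨by simp [cfQ], by simp [cfQ]⟩
    | succ n ih =>
      refine ⟨ih.2, ?_⟩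
      show f (a (n + 1)) * cfQ (fun i => f (a i)) (n + 1) + cfQ (fun i => f (a i)) n =
        f (cfQ a (n + 2))
      rw [ih.1, ih.2, show cfQ a (n + 2) = a (n + 1) * cfQ a (n + 1) + cfQ a n from rfl]
      rw [map_add, map_mul]
  exact fun n => (key n).1

lemma nat_decompose (Nb k n : ℕ) (hk : 1 ≤ k) (hn : Nb ≤ n) :
    ∃ j, j < k ∧ ∃ m, n = Nb + j + m * k := by
  refine ⟨(n - Nb) % k, Nat.mod_lt _ (by omega), (n - Nb) / k, ?_⟩
  have h := Nat.div_add_mod (n - Nb) k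
  rw [Nat.mul_comm]
  generalize hg : k * ((n - Nb) / k) = p at h ⊢
  omega

end Extra


/-- convergence criterion for an ultimately periodic continued fraction
with partial quotients in the ring of integers of a real quadratic field `K ⊆ ℝ`. -/
theorem ultimately_periodic_cf_convergence
    (K : Subfield ℝ) (hK : Module.finrank ℚ K = 2)
    (a : ℕ → K) (ha : ∀ n, IsIntegral ℤ (a n))
    (N k : ℕ) (hk : 1 ≤ k) (hper : ∀ n > N, a (n + k) = a n)
    (E : Matrix (Fin 2) (Fin 2) K)
    (hE : E = cfM ((List.range (N + 1)).map a) *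
        cfM ((List.range k).map (fun i => a (N + 1 + i))) *
        (cfM ((List.range (N + 1)).map a))⁻¹)
    (Δ : K) (hΔ : Δ = (E 1 1 - E 0 0) ^ 2 + 4 * E 0 1 * E 1 0) :
    (0 < (Δ : ℝ) → ¬(∃ y : K, y ^ 2 = Δ) →
      ∃ ξ : ℝ, CFConvergesTo (fun n => (a n : ℝ)) ξ) ∧
    ((Δ : ℝ) < 0 → ¬∃ ξ : ℝ, CFConvergesTo (fun n => (a n : ℝ)) ξ) := by
  classical
  set b : ℕ → ℝ := fun n => ((a n : K) : ℝ) with hb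
  have hQcast : ∀ n, cfQ b n = ((cfQ a n : K) : ℝ) := cfQ_map K.subtype a
  set t : K := (cfW a k (N + 1)).trace with ht
  set tR : ℝ := (t : ℝ) with htR
  set dR : ℝ := (-1 : ℝ) ^ k with hdR
  -- Step A : Δ = t² - 4·(-1)^k
  set A : Matrix (Fin 2) (Fin 2) K := cfM ((List.range (N + 1)).map a) with hA
  set B : Matrix (Fin 2) (Fin 2) K := cfW a k (N + 1) with hB
  have hEAB : E = A * B * A⁻¹ := hE
  have hdetA : A.det = (-1) ^ (N + 1) := by
    rw [hA, det_cfM, List.length_map, List.length_range]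
  have hdetA0 : A.det ≠ 0 := by
    rw [hdetA]; exact pow_ne_zero _ (neg_ne_zero.mpr one_ne_zero)
  have hu : IsUnit A.det := isUnit_iff_ne_zero.mpr hdetA0
  have htrE : E.trace = t := by
    rw [hEAB, Matrix.trace_mul_comm, ← Matrix.mul_assoc,
      Matrix.nonsing_inv_mul A hu, Matrix.one_mul, ht, hB]
  have hdetE : E.det = (-1) ^ k := by
    rw [hEAB, Matrix.det_mul, Matrix.det_mul, Matrix.det_nonsing_inv,
      Ring.inverse_eq_inv']
    rw [hB, det_cfW]
    field_simp
  have h1 : E 0 0 + E 1 1 = t := by rw [← Matrix.trace_fin_two]; exact htrE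
  have h2 : E 0 0 * E 1 1 - E 0 1 * E 1 0 = (-1) ^ k := by
    rw [← Matrix.det_fin_two]; exact hdetE
  have hΔeq : Δ = t ^ 2 - 4 * (-1 : K) ^ k := by
    rw [hΔ, ← h1, ← h2]; ring
  have hΔR : (Δ : ℝ) = tR ^ 2 - 4 * dR := by
    rw [hΔeq, hdR]; push_cast
    rw [htR, show ((4 : K) : ℝ) = (4 : ℝ) from by norm_cast]
  -- Step B : the recurrence for the denominators along residue classes
  have htrc : ∀ s, N + 1 ≤ s → (cfW a k s).trace = t := by
    intro s hs
    have h := trace_const a N k hper hk (s - (N + 1))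
    rwa [show N + 1 + (s - (N + 1)) = s by omega] at h
  have hrecK : ∀ s, N + 1 ≤ s → ∀ m, cfQ a (s + (m + 2) * k) =
      t * cfQ a (s + (m + 1) * k) - (-1) ^ k * cfQ a (s + m * k) := by
    intro s hs m
    rw [cfQ_rec a N k hper s hs m, htrc s hs]
  have hrecR : ∀ j m, cfQ b (N + 1 + j + (m + 2) * k) =
      tR * cfQ b (N + 1 + j + (m + 1) * k) - dR * cfQ b (N + 1 + j + m * k) := by
    intro j m
    have h := hrecK (N + 1 + j) (by omega) m
    rw [hQcast, hQcast, hQcast, h]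
    push_cast
    ring
  -- the "not both zero" fact for consecutive denominators
  have hnb : ∀ n, ¬(cfQ a n = 0 ∧ cfQ a (n + 1) = 0) := by
    rintro n ⟨h0, h1⟩
    have h := cf_det_id a n
    rw [h0, h1] at h
    simp only [mul_zero, zero_sub, neg_eq_iff_eq_neg, zero_eq_neg] at h
    exact pow_ne_zero _ (neg_ne_zero.mpr (one_ne_zero : (1:K) ≠ 0)) h
  clear_value b t tR dR A B
  constructor
  · -- positive, non-square case: convergence
    intro hpos hnsq
    -- triangularity : consecutive-period denominators cannot both vanish
    have htri : ∀ j, ¬(cfQ a (N + j + 1) = 0 ∧ cfQ a (N + j + 1 + k) = 0) := by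
      rintro j ⟨h0, hk0⟩
      have hstep := cfM_step a k (N + j + 1)
      have e1 : cfM ((List.range (N + j + 1 + k)).map a) 1 0
          = (cfM ((List.range (N + j + 1)).map a) * cfW a k (N + j + 1)) 1 0 := by
        rw [hstep]
      rw [show N + j + 1 + k = (N + j + k) + 1 by omega, cfM_range a (N + j + k)] at e1
      rw [cfM_range a (N + j), Matrix.mul_apply, Fin.sum_univ_two] at e1
      have e2 : cfQ a (N + j + k + 1) =
          cfQ a (N + j + 1) * cfW a k (N + j + 1) 0 0 +
            cfQ a (N + j) * cfW a k (N + j + 1) 1 0 := by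
        simpa using e1
      rw [h0, show N + j + k + 1 = N + j + 1 + k by omega, hk0, zero_mul, zero_add] at e2
      have hq' : cfQ a (N + j) ≠ 0 := fun hz => hnb (N + j) ⟨hz, h0⟩
      have hW10 : cfW a k (N + j + 1) 1 0 = 0 := by
        rcases mul_eq_zero.mp e2.symm with h | h
        · exact absurd h hq'
        · exact h
      apply hnsq
      refine ⟨cfW a k (N + j + 1) 0 0 - cfW a k (N + j + 1) 1 1, ?_⟩
      have htr2 : cfW a k (N + j + 1) 0 0 + cfW a k (N + j + 1) 1 1 = t := by
        have h := htrc (N + j + 1) (by omega)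
        rwa [Matrix.trace_fin_two] at h
      have hdet2 : cfW a k (N + j + 1) 0 0 * cfW a k (N + j + 1) 1 1 -
          cfW a k (N + j + 1) 0 1 * cfW a k (N + j + 1) 1 0 = (-1) ^ k := by
        have h := det_cfW a k (N + j + 1)
        rwa [Matrix.det_fin_two] at h
      rw [hΔeq, ← htr2, ← hdet2, hW10]
      ring
    -- the real quadratic data
    have hs0 : Real.sqrt ((Δ : K) : ℝ) ^ 2 = ((Δ : K) : ℝ) := Real.sq_sqrt hpos.le
    set s0 : ℝ := Real.sqrt ((Δ : K) : ℝ) with hs0def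
    have hs0pos : 0 < s0 := Real.sqrt_pos.mpr hpos
    set lam : ℝ := (tR + s0) / 2 with hlam
    set mu : ℝ := (tR - s0) / 2 with hmu
    have hsum : lam + mu = tR := by rw [hlam, hmu]; ring
    have hs2 : s0 ^ 2 = tR ^ 2 - 4 * dR := by rw [hs0, hΔR]
    have hprod : lam * mu = dR := by
      rw [hlam, hmu]; linear_combination (-1 / 4 : ℝ) * hs2
    have hneq : lam ≠ mu := by
      rw [hlam, hmu]
      intro h
      have : s0 = 0 := by linarith
      exact absurd this (ne_of_gt hs0pos)
    have habs1 : |lam| * |mu| = 1 := by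
      rw [← abs_mul, hprod, hdR, abs_pow, abs_neg, abs_one, one_pow]
    have hcastne : ∀ y : K, ((y : ℝ) ≠ lam) ∧ ((y : ℝ) ≠ mu) := by
      intro y
      constructor
      · intro h
        apply hnsq
        refine ⟨2 * y - t, ?_⟩
        have hcast : ((2 * y - t : K) : ℝ) = s0 := by
          have h2 : ((2 : K) : ℝ) = 2 := by norm_cast
          push_cast
          rw [h2, ← htR, h, hlam]; ring
        have hfin : (((2 * y - t) ^ 2 : K) : ℝ) = ((Δ : K) : ℝ) := by
          calc (((2 * y - t) ^ 2 : K) : ℝ) = ((2 * y - t : K) : ℝ) ^ 2 := by push_cast; ring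
            _ = s0 ^ 2 := by rw [hcast]
            _ = ((Δ : K) : ℝ) := hs0
        exact_mod_cast hfin
      · intro h
        apply hnsq
        refine ⟨t - 2 * y, ?_⟩
        have hcast : ((t - 2 * y : K) : ℝ) = s0 := by
          have h2 : ((2 : K) : ℝ) = 2 := by norm_cast
          push_cast
          rw [h2, ← htR, h, hmu]; ring
        have hfin : (((t - 2 * y) ^ 2 : K) : ℝ) = ((Δ : K) : ℝ) := by
          calc (((t - 2 * y) ^ 2 : K) : ℝ) = ((t - 2 * y : K) : ℝ) ^ 2 := by push_cast; ring
            _ = s0 ^ 2 := by rw [hcast]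
            _ = ((Δ : K) : ℝ) := hs0
        exact_mod_cast hfin
    have habsne : |lam| ≠ |mu| := by
      intro h
      rcases abs_eq_abs.mp h with heq | heq
      · exact hneq heq
      · have htR0 : tR = 0 := by rw [← hsum, heq]; ring
        have ht0 : t = 0 := by
          have h' : (t : ℝ) = 0 := by rw [← htR]; exact htR0
          exact_mod_cast h'
        rcases Nat.even_or_odd k with he | ho
        · have hd1 : dR = 1 := by rw [hdR]; exact he.neg_one_pow
          rw [hΔR, htR0, hd1] at hpos
          norm_num at hpos
        · apply hnsq
          refine ⟨2, ?_⟩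
          have hm1 : (-1 : K) ^ k = -1 := ho.neg_one_pow
          rw [hΔeq, ht0, hm1]
          norm_num
    -- the leading coefficients are nonzero
    have hcj : ∀ z : ℝ, (z = lam ∨ z = mu) → ∀ j : ℕ,
        cfQ b (N + 1 + j + 1 * k) ≠ z * cfQ b (N + 1 + j + 0 * k) := by
      intro z hz j h
      rw [show N + 1 + j + 1 * k = (N + 1 + j) + k by omega,
        show N + 1 + j + 0 * k = N + 1 + j by omega] at h
      by_cases h0 : cfQ a (N + 1 + j) = 0
      · have hb0 : cfQ b (N + 1 + j) = 0 := by
          rw [hQcast, h0]; exact ZeroMemClass.coe_zero K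
        rw [hb0, mul_zero, hQcast] at h
        have hz0 : cfQ a (N + 1 + j + k) = 0 := by exact_mod_cast h
        exact htri j ⟨by rwa [show N + j + 1 = N + 1 + j by omega],
          by rwa [show N + j + 1 + k = N + 1 + j + k by omega]⟩
      · have hb0 : ((cfQ a (N + 1 + j) : K) : ℝ) ≠ 0 := by exact_mod_cast h0
        have hbne : cfQ b (N + 1 + j) ≠ 0 := by rw [hQcast]; exact hb0
        have hzval : ((cfQ a (N + 1 + j + k) / cfQ a (N + 1 + j) : K) : ℝ) = z := by
          have hcoe : ((cfQ a (N + 1 + j + k) / cfQ a (N + 1 + j) : K) : ℝ)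
              = ((cfQ a (N + 1 + j + k) : K) : ℝ) / ((cfQ a (N + 1 + j) : K) : ℝ) := by
            push_cast; ring
          rw [hcoe, ← hQcast, ← hQcast, h, mul_div_assoc, div_self hbne, mul_one]
        rcases hz with rfl | rfl
        · exact (hcastne _).1 hzval
        · exact (hcastne _).2 hzval
    -- conclude, according to which root is the large one
    rcases habsne.lt_or_gt with hlt | hlt
    · -- |lam| < |mu| : mu is the large root
      have habs1' : |mu| * |lam| = 1 := by rw [mul_comm]; exact habs1
      have hl1 : 1 < |mu| := by
        by_contra hc
        push_neg at hc
        have hlt1 : |mu| * |lam| < 1 :=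
          calc |mu| * |lam| ≤ 1 * |lam| := mul_le_mul_of_nonneg_right hc (abs_nonneg lam)
            _ = |lam| := one_mul _
            _ < |mu| := hlt
            _ ≤ 1 := hc
        linarith [habs1']
      have hm1' : |lam| ≤ 1 := by
        calc |lam| = 1 * |lam| := (one_mul _).symm
          _ ≤ |mu| * |lam| := mul_le_mul_of_nonneg_right hl1.le (abs_nonneg lam)
          _ = 1 := habs1'
      have hgrow : ∀ j : ℕ, ∃ ε > 0, ∃ M : ℕ, ∀ m ≥ M,
          ε * |mu| ^ m ≤ |cfQ b (N + 1 + j + m * k)| := by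
        intro j
        exact geom_lower (fun m => cfQ b (N + 1 + j + m * k)) tR dR mu lam
          (fun m => hrecR j m) (by rw [add_comm]; exact hsum)
          (by rw [mul_comm]; exact hprod) hneq.symm hl1 hm1' (hcj lam (Or.inl rfl) j)
      obtain ⟨A', hA', θ, hθ, N₀, hg⟩ := combine_growth (cfQ b) k (N + 1) hk |mu| hl1 hgrow
      exact pos_case b A' θ hA' hθ N₀ hg
    · -- |mu| < |lam| : lam is the large root
      have hl1 : 1 < |lam| := by
        by_contra hc
        push_neg at hc
        have hlt1 : |lam| * |mu| < 1 :=
          calc |lam| * |mu| ≤ 1 * |mu| := mul_le_mul_of_nonneg_right hc (abs_nonneg mu)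
            _ = |mu| := one_mul _
            _ < |lam| := hlt
            _ ≤ 1 := hc
        linarith [habs1]
      have hm1' : |mu| ≤ 1 := by
        calc |mu| = 1 * |mu| := (one_mul _).symm
          _ ≤ |lam| * |mu| := mul_le_mul_of_nonneg_right hl1.le (abs_nonneg mu)
          _ = 1 := habs1
      have hgrow : ∀ j : ℕ, ∃ ε > 0, ∃ M : ℕ, ∀ m ≥ M,
          ε * |lam| ^ m ≤ |cfQ b (N + 1 + j + m * k)| := by
        intro j
        exact geom_lower (fun m => cfQ b (N + 1 + j + m * k)) tR dR lam mu
          (fun m => hrecR j m) hsum hprod hneq hl1 hm1' (hcj mu (Or.inr rfl) j)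
      obtain ⟨A', hA', θ, hθ, N₀, hg⟩ := combine_growth (cfQ b) k (N + 1) hk |lam| hl1 hgrow
      exact pos_case b A' θ hA' hθ N₀ hg
  · -- negative case : divergence
    intro hneg
    have hkeven : dR = 1 := by
      rcases Nat.even_or_odd k with he | ho
      · rw [hdR]; exact he.neg_one_pow
      · exfalso
        have h' : dR = -1 := by rw [hdR]; exact ho.neg_one_pow
        rw [hΔR, h'] at hneg
        linarith [sq_nonneg tR]
    have htR2 : |tR| < 2 := by
      rw [hΔR, hkeven] at hneg
      exact abs_lt_of_sq_lt_sq (by linarith) (by norm_num)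
    have hbd : ∀ j, ∃ C, ∀ m, |cfQ b (N + 1 + j + m * k)| ≤ C := by
      intro j
      apply bounded_lemma (fun m => cfQ b (N + 1 + j + m * k)) tR htR2
      intro m
      have := hrecR j m
      rw [hkeven] at this
      simpa using this
    choose C hC using hbd
    have hne : (Finset.range k).Nonempty := ⟨0, Finset.mem_range.mpr hk⟩
    set Cg : ℝ := (Finset.range k).sup' hne C with hCg
    apply neg_case b Cg (N + 1)
    intro n hn
    obtain ⟨j, hjk, m, rfl⟩ := nat_decompose (N + 1) k n hk hn
    exact le_trans (hC j m) (Finset.le_sup' C (Finset.mem_range.mpr hjk))
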